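/- Let F be a field, let k, r ≥ 1, and let f_1, …, f_k ∈ F[x_1,…,x_r] (MvPolynomial (Fin r) F) be linearly independent over F. Let K := FractionField (MvPolynomial (Fin k × Fin r) F) and for j = 1,…,k let α_j ∈ K^r be the tuple whose t-th coordinate is the image of the variable X_{(j,t)}. Then the k×k matrix M with entries M_{i,j} := f_i(α_j) (evaluation via the algebra map into K) has nonzero determinant. (In other words, a generic polynomial code with linearly independent defining polynomials is MDS.) -/

import Mathlib

open Finset Matrix

noncomputable section

/-- The intersection `⋂_{j ∈ p} A j`, as a `Finset (Fin n)`. -/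
def interSet {ℓ n : ℕ} (A : Fin ℓ → Finset (Fin n)) (p : Finset (Fin ℓ)) : Finset (Fin n) :=
  Finset.univ.filter fun x => ∀ j ∈ p, x ∈ A j

/-- The dimension-`m` null intersection property: for every partition of `{1,…,ℓ}`
(presented as a `Finpartition` of `Finset.univ : Finset (Fin ℓ)`) into nonempty parts
`P_1,…,P_s`, we have `Σ_i |⋂_{j ∈ P_i} A_j| ≤ (s-1)·m`. -/
def NullInter {ℓ n : ℕ} (m : ℕ) (A : Fin ℓ → Finset (Fin n)) : Prop :=
  ∀ P : Finpartition (Finset.univ : Finset (Fin ℓ)),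
    ∑ p ∈ P.parts, (interSet A p).card ≤ (P.parts.card - 1) * m

/-- Span of the columns of `M` indexed by `A`. -/
def colSpan {K : Type*} [Field K] {k n : ℕ} (M : Matrix (Fin k) (Fin n) K)
    (A : Finset (Fin n)) : Submodule K (Fin k → K) :=
  Submodule.span K ((fun j i => M i j) '' (A : Set (Fin n)))

/-- Span of the first `σ` columns of `M`. -/
def colSpanLT {K : Type*} [Field K] {k b : ℕ} (M : Matrix (Fin k) (Fin b) K)
    (σ : ℕ) : Submodule K (Fin k → K) :=
  Submodule.span K ((fun j i => M i j) '' {j : Fin b | (j : ℕ) < σ})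

/-- The minimum of `σ` over the set `p` (for nonempty `p`, this is `min_{j ∈ p} σ j`). -/
def partMin {ℓ : ℕ} (σ : Fin ℓ → ℕ) (p : Finset (Fin ℓ)) : ℕ :=
  sInf (σ '' (p : Set (Fin ℓ)))

/-- The generic intersection dimension `gid_m((σ_i, A_i)_i)`: the maximum over all
partitions of `{1,…,ℓ}` into nonempty parts `P_1,…,P_s` of
`-m(s-1) + Σ_i (min_{j ∈ P_i} σ_j + |⋂_{j ∈ P_i} A_j|)`. -/
def gid {ℓ n : ℕ} (m : ℕ) (σ : Fin ℓ → ℕ) (A : Fin ℓ → Finset (Fin n)) : ℤ :=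
  sSup { v : ℤ | ∃ P : Finpartition (Finset.univ : Finset (Fin ℓ)),
    v = -(m : ℤ) * ((P.parts.card : ℤ) - 1)
      + ∑ p ∈ P.parts, ((partMin σ p : ℤ) + ((interSet A p).card : ℤ)) }

/-- Key linear algebra lemma: linearly independent vectors `v i : S → L` admit
points `s j` making the evaluation matrix nonsingular. -/
lemma key_points {L S : Type*} [Field L] {k : ℕ} (v : Fin k → S → L)
    (hv : LinearIndependent L v) :
    ∃ s : Fin k → S, (Matrix.of fun i j => v i (s j)).det ≠ 0 := by
  classical
  set T : Set (Fin k → L) := Set.range (fun s : S => fun i => v i s) with hT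
  have hspan : Submodule.span L T = ⊤ := by
    by_contra h
    obtain ⟨φ, hφ0, hφ⟩ := (Submodule.span L T).exists_dual_map_eq_bot_of_lt_top
      (lt_top_iff_ne_top.mpr h) inferInstance
    have hvan : ∀ s : S, φ (fun i => v i s) = 0 := by
      intro s
      have : (fun i => v i s) ∈ Submodule.span L T :=
        Submodule.subset_span ⟨s, rfl⟩
      have := Submodule.mem_map_of_mem (f := φ) this
      rw [hφ] at this
      exact (Submodule.mem_bot L).mp this
    set c : Fin k → L := fun i => φ (fun j => if i = j then (1:L) else 0) with hc
    have hsum : ∀ s : S, ∑ i, v i s • c i = 0 := by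
      intro s
      have := hvan s
      rwa [LinearMap.pi_apply_eq_sum_univ φ (fun i => v i s)] at this
    have hc0 : c = 0 := by
      have := Fintype.linearIndependent_iff.mp hv c ?_
      · funext i; exact this i
      · funext s
        simpa [mul_comm] using hsum s
    apply hφ0
    ext x
    have h1 : (fun j => if x = j then (1:L) else 0) = Pi.single x 1 := by
      funext j; simp [Pi.single_apply, eq_comm]
    have h2 : φ (fun j => if x = j then (1:L) else 0) = 0 := congrFun hc0 x
    rw [h1] at h2
    simpa using h2
  obtain ⟨b, hbT, hbspan, hbind⟩ := exists_linearIndependent L T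
  rw [hspan] at hbspan
  haveI : Fintype b := (Set.Finite.fintype (hbind.setFinite))
  have hcard : Fintype.card b = k := by
    have B : Module.Basis b L (Fin k → L) := Module.Basis.mk hbind
      (by rw [Subtype.range_coe]; exact hbspan.ge)
    have := Module.finrank_eq_card_basis B
    simpa [Module.finrank_fintype_fun_eq_card] using this.symm
  obtain ⟨e⟩ : Nonempty (Fin k ≃ b) :=
    ⟨(Fintype.equivFinOfCardEq hcard).symm⟩
  -- choose preimages
  have hex : ∀ j : Fin k, ∃ s : S, (fun i => v i s) = (e j : Fin k → L) := by
    intro j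
    obtain ⟨s, hs⟩ := hbT (e j).2
    exact ⟨s, hs⟩
  choose s hs using hex
  refine ⟨s, ?_⟩
  have hind : LinearIndependent L (fun j : Fin k => ((e j : Fin k → L))) :=
    hbind.comp (fun j => e j) (fun a b hab => by
      apply e.injective; exact Subtype.ext (congrArg Subtype.val hab))
  have hcols : LinearIndependent L
      (fun j : Fin k => (Matrix.of fun i j => v i (s j))ᵀ j) := by
    convert hind using 1
    funext j
    ext i
    simpa [Matrix.transpose_apply] using congrFun (hs j) i
  have := Matrix.linearIndependent_cols_iff_isUnit.mp hcols
  rw [Matrix.isUnit_iff_isUnit_det] at this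
  exact this.ne_zero

end

noncomputable section

/-- Linear independence of polynomials gives monomials with nonsingular coefficient matrix. -/
lemma exists_monomials {F : Type*} [Field F] {k r : ℕ}
    (f : Fin k → MvPolynomial (Fin r) F) (hf : LinearIndependent F f) :
    ∃ m : Fin k → (Fin r →₀ ℕ),
      (Matrix.of fun i j => MvPolynomial.coeff (m j) (f i)).det ≠ 0 := by
  classical
  let T : MvPolynomial (Fin r) F →ₗ[F] ((Fin r →₀ ℕ) → F) :=
    { toFun := fun p d => MvPolynomial.coeff d p
      map_add' := fun p q => by funext d; simp [MvPolynomial.coeff_add]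
      map_smul' := fun a p => by funext d; simp [MvPolynomial.coeff_smul] }
  have hker : LinearMap.ker T = ⊥ := by
    rw [LinearMap.ker_eq_bot]
    intro p q h
    apply MvPolynomial.ext
    intro d
    exact congrFun h d
  have hvi : LinearIndependent F (T ∘ f) := hf.map' T hker
  exact key_points (fun i => T (f i)) hvi


set_option maxHeartbeats 1000000 in
set_option synthInstance.maxHeartbeats 200000 in
/-- A generic polynomial code with linearly independent defining polynomials is MDS:
the `k × k` evaluation matrix at generic points has nonzero determinant. -/
theorem generic_polynomial_code_det_ne_zero
    (F : Type*) [Field F] (k r : ℕ) (hk : 1 ≤ k) (hr : 1 ≤ r)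
    (f : Fin k → MvPolynomial (Fin r) F) (hf : LinearIndependent F f) :
    (Matrix.of fun i j : Fin k => MvPolynomial.eval₂
      ((algebraMap (MvPolynomial (Fin k × Fin r) F)
        (FractionRing (MvPolynomial (Fin k × Fin r) F))).comp
        (MvPolynomial.C : F →+* MvPolynomial (Fin k × Fin r) F))
      (fun t => algebraMap (MvPolynomial (Fin k × Fin r) F)
        (FractionRing (MvPolynomial (Fin k × Fin r) F)) (MvPolynomial.X (j, t)))
      (f i)).det ≠ 0 := by
  classical
  set R := MvPolynomial (Fin k × Fin r) F with hR
  set L := FractionRing R with hL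
  set ψ : R →+* L := algebraMap R L with hψ
  set φ : F →+* L := ψ.comp MvPolynomial.C with hφ
  haveI : Nonempty (Fin k × Fin r) :=
    ⟨(⟨0, hk⟩, ⟨0, hr⟩)⟩
  haveI : Infinite R := MvPolynomial.infinite_of_nonempty _ _
  have hψinj : Function.Injective ψ := IsFractionRing.injective R L
  haveI : Infinite L := Infinite.of_injective ψ hψinj
  -- coefficient monomials
  obtain ⟨m, hm⟩ := exists_monomials f hf
  -- mapped polynomials over L
  set g : Fin k → MvPolynomial (Fin r) L := fun i => MvPolynomial.map φ (f i) with hg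
  have hφinj : Function.Injective φ := φ.injective
  have hgind : LinearIndependent L g := by
    rw [Fintype.linearIndependent_iff]
    intro a ha
    set B : Matrix (Fin k) (Fin k) L :=
      Matrix.of fun j i => φ (MvPolynomial.coeff (m j) (f i)) with hB
    have hBdet : B.det ≠ 0 := by
      have : B = φ.mapMatrix (Matrix.of fun j i => MvPolynomial.coeff (m j) (f i)) := rfl
      rw [this, ← RingHom.map_det]
      intro h
      apply hm
      have h0 : (Matrix.of fun j i => MvPolynomial.coeff (m j) (f i)).det = 0 := by
        have := hφinj (by rw [h]; simp : φ ((Matrix.of fun j i => MvPolynomial.coeff (m j) (f i)).det) = φ 0)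
        exact this
      calc (Matrix.of fun i j => MvPolynomial.coeff (m j) (f i)).det
          = (Matrix.of fun j i => MvPolynomial.coeff (m j) (f i))ᵀ.det := by
            congr 1
        _ = 0 := by rw [Matrix.det_transpose, h0]
    have hmv : B.mulVec a = 0 := by
      funext j
      have hcoeff := congrArg (MvPolynomial.coeff (m j)) ha
      simp only [MvPolynomial.coeff_zero] at hcoeff
      rw [Matrix.mulVec]
      simp only [dotProduct, Pi.zero_apply]
      rw [← hcoeff]
      rw [MvPolynomial.coeff_sum]
      apply Finset.sum_congr rfl
      intro i _
      simp [hg, MvPolynomial.coeff_smul, MvPolynomial.coeff_map, mul_comm, hB]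
    intro i
    have := Matrix.eq_zero_of_mulVec_eq_zero hBdet hmv
    exact congrFun this i
  -- independence as functions via evaluation
  let E : MvPolynomial (Fin r) L →ₗ[L] ((Fin r → L) → L) :=
    { toFun := fun p x => MvPolynomial.eval x p
      map_add' := fun p q => by funext x; exact (MvPolynomial.eval x).map_add p q
      map_smul' := fun a p => by
        funext x
        show MvPolynomial.eval x (a • p) = a * MvPolynomial.eval x p
        rw [MvPolynomial.smul_eval] }
  have hEker : LinearMap.ker E = ⊥ := by
    rw [LinearMap.ker_eq_bot]
    intro p q h
    exact MvPolynomial.funext fun x => congrFun h x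
  have hwind : LinearIndependent L (E ∘ g) := hgind.map' E hEker
  obtain ⟨β, hβ⟩ := key_points (fun i => E (g i)) hwind
  -- now the main argument
  set N : Matrix (Fin k) (Fin k) R :=
    Matrix.of fun i j => MvPolynomial.eval₂ MvPolynomial.C
      (fun t => MvPolynomial.X (j, t)) (f i) with hN
  have hMN : (Matrix.of fun i j : Fin k => MvPolynomial.eval₂ (ψ.comp MvPolynomial.C)
      (fun t => ψ (MvPolynomial.X (j, t))) (f i)) = ψ.mapMatrix N := by
    ext i j
    exact (MvPolynomial.eval₂_comp_left ψ MvPolynomial.C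
      (fun t => MvPolynomial.X (j, t)) (f i)).symm
  have hNdet : N.det ≠ 0 := by
    intro h0
    set ε : R →+* L := MvPolynomial.eval₂Hom φ (fun q : Fin k × Fin r => β q.1 q.2) with hε
    have hεN : ε.mapMatrix N = Matrix.of fun i j => MvPolynomial.eval (β j) (g i) := by
      ext i j
      show ε (N i j) = MvPolynomial.eval (β j) (g i)
      rw [hN]
      show ε (MvPolynomial.eval₂ MvPolynomial.C (fun t => MvPolynomial.X (j, t)) (f i)) = _
      rw [MvPolynomial.eval₂_comp_left ε MvPolynomial.C
        (fun t => MvPolynomial.X (j, t)) (f i)]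
      rw [hg]
      simp only [MvPolynomial.eval_map]
      congr 1
      · exact MvPolynomial.eval₂Hom_comp_C _ _
      · funext t
        exact MvPolynomial.eval₂Hom_X' _ _ _
    have : (ε.mapMatrix N).det = 0 := by
      rw [← RingHom.map_det, h0, map_zero]
    rw [hεN] at this
    exact hβ this
  have : (ψ.mapMatrix N).det ≠ 0 := by
    rw [← RingHom.map_det]
    intro h
    exact hNdet (hψinj (by rw [h]; simp))
  rw [← hMN] at this
  exact this
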